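/- Let K = ℚ(√−7) be the quadratic field obtained by adjoining to ℚ a square root of −7, and let ω = ((1 − √−7)/(1 + √−7))⁷ ∈ K. Then the field norm N_{K/ℚ}(ω − 3/128) = (11·757)/2¹³ = 8327/8192, and both 11 and 757 are prime. -/

import Mathlib

/-- In `K = ℚ(√−7)` with `ω = ((1 − s)/(1 + s))⁷`, the field norm satisfies
`N(ω − 3/128) = 11·757/2¹³ = 8327/8192`, and both 11 and 757 are prime. -/
theorem stmt_16 (K : Type*) [Field K] [Algebra ℚ K] [FiniteDimensional ℚ K]
    (hdim : Module.finrank ℚ K = 2) (s : K) (hs : s ^ 2 = -7) :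
    Algebra.norm ℚ (((1 - s) / (1 + s)) ^ 7 - 3 / 128) = 11 * 757 / 2 ^ 13 ∧
    (11 * 757 : ℚ) / 2 ^ 13 = 8327 / 8192 ∧
    Nat.Prime 11 ∧ Nat.Prime 757 := by
  haveI : CharZero K := charZero_of_injective_algebraMap (algebraMap ℚ K).injective
  have hinj := (algebraMap ℚ K).injective
  have hcast : ∀ q : ℚ, algebraMap ℚ K q = (q : K) := fun q => eq_ratCast _ q
  have hns : (1 + s) ≠ 0 := by
    intro h
    have hs1 : s = -1 := by linear_combination h
    rw [hs1] at hs
    norm_num at hs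
  -- rewrite the element
  set a : ℚ := -93/256 with ha
  set bb : ℚ := 91/256 with hbb
  have h7 : (-3 - s)^7 = -5568 + 5824*s := by
    linear_combination (483 - 1561*s - 798*s^2 - 182*s^3 - 21*s^4 - s^5) * hs
  have hfrac : (1 - s)/(1 + s) = (-3 - s)/4 := by
    rw [div_eq_div_iff hns (by norm_num : (4:K) ≠ 0)]
    linear_combination hs
  have hx : ((1 - s) / (1 + s)) ^ 7 - 3 / 128 = a • (1:K) + bb • s := by
    rw [hfrac, div_pow, h7, Algebra.smul_def, Algebra.smul_def, hcast, hcast]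
    ring
  -- basis
  have hli : LinearIndependent ℚ ![(1:K), s] := by
    rw [LinearIndependent.pair_iff]
    intro c d h
    rw [Algebra.smul_def, Algebra.smul_def, hcast, hcast, mul_one] at h
    rcases eq_or_ne d 0 with hd | hd
    · subst hd
      refine ⟨?_, rfl⟩
      have h0 : ((c:ℚ):K) = 0 := by simpa using h
      exact_mod_cast h0
    · exfalso
      have hd' : ((d:ℚ) : K) ≠ 0 := Rat.cast_ne_zero.mpr hd
      have hseq : s = ((-(c/d) : ℚ) : K) := by
        push_cast
        field_simp
        linear_combination h
      have : ((-(c/d))^2 : ℚ) = -7 := by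
        apply hinj
        rw [map_pow, hcast, ← hseq, hs, hcast]
        norm_num
      nlinarith [sq_nonneg (c/d)]
  have hcard : Fintype.card (Fin 2) = Module.finrank ℚ K := by rw [hdim]; simp
  let b := basisOfLinearIndependentOfCardEqFinrank hli hcard
  have hb0 : b 0 = 1 := by
    simp [b, coe_basisOfLinearIndependentOfCardEqFinrank]
  have hb1 : b 1 = s := by
    simp [b, coe_basisOfLinearIndependentOfCardEqFinrank]
  set x : K := a • (1:K) + bb • s with hxdef
  have e0 : x * b 0 = a • b 0 + bb • b 1 := by
    rw [hb0, hb1, mul_one]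
  have e1 : x * b 1 = (-7*bb) • b 0 + a • b 1 := by
    rw [hb0, hb1, hxdef]
    simp only [Algebra.smul_def, hcast]
    push_cast
    linear_combination ((bb : K)) * hs
  have hnorm : Algebra.norm ℚ x = a^2 + 7*bb^2 := by
    rw [Algebra.norm_eq_matrix_det b x, Matrix.det_fin_two]
    have h00 : Algebra.leftMulMatrix b x 0 0 = a := by
      rw [Algebra.leftMulMatrix_eq_repr_mul, e0]
      simp [Finsupp.single_apply]
    have h10 : Algebra.leftMulMatrix b x 1 0 = bb := by
      rw [Algebra.leftMulMatrix_eq_repr_mul, e0]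
      simp [Finsupp.single_apply]
    have h01 : Algebra.leftMulMatrix b x 0 1 = -7*bb := by
      rw [Algebra.leftMulMatrix_eq_repr_mul, e1]
      simp [Finsupp.single_apply]
    have h11 : Algebra.leftMulMatrix b x 1 1 = a := by
      rw [Algebra.leftMulMatrix_eq_repr_mul, e1]
      simp [Finsupp.single_apply]
    rw [h00, h01, h10, h11]
    ring
  refine ⟨?_, by norm_num, by norm_num, by norm_num⟩
  rw [hx, hnorm, ha, hbb]
  norm_num
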